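/- Let A_1,…,A_m be n×n real diagonal matrices and let k, p ≥ 1. If n ≥ p((m+1)k − m), then the joint rank (k:p)-matricial range Λ_{(k:p)}(A_1,…,A_m) is non-empty. -/

import Mathlib

open Matrix Kronecker

/-- The joint rank `(k:p)`-matricial range of a tuple `A` of square complex matrices
(rows/columns indexed by a finite type `I` of cardinality `n`, tuple indexed by `J`):
tuples `(D_j)` of `p × p` complex diagonal matrices such that there is an `n × (kp)`
matrix `V` with `V* V = I_{kp}` and `V* A_j V = D_j ⊗ I_k` for all `j`. -/
def matricialRange {I J : Type*} [Fintype I] (k p : ℕ)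
    (A : J → Matrix I I ℂ) : Set (J → Matrix (Fin p) (Fin p) ℂ) :=
  {D | (∀ j, (D j).IsDiag) ∧
    ∃ V : Matrix I (Fin p × Fin k) ℂ, Vᴴ * V = 1 ∧
      ∀ j, Vᴴ * A j * V = (D j) ⊗ₖ (1 : Matrix (Fin k) (Fin k) ℂ)}

/-- The joint rank-`k` numerical range `Λ_k(A) = Λ_{(k:1)}(A)`, with elements identified
with scalar tuples: `x ∈ Λ_k(A)` iff there is `V` with `V* V = I_k` and `V* A_j V = x_j I_k`. -/
def jointRankRange {I J : Type*} [Fintype I] (k : ℕ)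
    (A : J → Matrix I I ℂ) : Set (J → ℂ) :=
  {x | ∃ V : Matrix I (Fin k) ℂ, Vᴴ * V = 1 ∧ ∀ j, Vᴴ * A j * V = x j • 1}

/-- The joint rank-`k` numerical range, projection form: `x ∈ Λ_k(A)` iff there is a
rank-`k` orthogonal projection `P` with `P A_j P = x_j P` for all `j`. -/
def jointRankRangeP {n : ℕ} {J : Type*} (k : ℕ)
    (A : J → Matrix (Fin n) (Fin n) ℂ) : Set (J → ℂ) :=
  {x | ∃ P : Matrix (Fin n) (Fin n) ℂ, P.IsHermitian ∧ P * P = P ∧ P.rank = k ∧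
    ∀ j, P * A j * P = x j • P}

open Finset

section CC
variable {E : Type*} [NormedAddCommGroup E] [InnerProductSpace ℝ E]

local notation "⟪" x ", " y "⟫" => @inner ℝ _ _ x y

lemma improve_inner {Y x : E} (h : ⟪Y, x⟫ < ⟪Y, Y⟫) :
    ∃ z ∈ segment ℝ Y x, ⟪z, z⟫ < ⟪Y, Y⟫ := by
  have hs0 : 0 ≤ ⟪x, x⟫ - 2 * ⟪Y, x⟫ + ⟪Y, Y⟫ := by
    have h0 : (0:ℝ) ≤ ⟪x - Y, x - Y⟫ := real_inner_self_nonneg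
    simp only [inner_sub_left, inner_sub_right] at h0
    linarith [real_inner_comm x Y]
  have hu : 0 < ⟪Y, Y⟫ - ⟪Y, x⟫ := by linarith
  have hd : 0 < (⟪Y, Y⟫ - ⟪Y, x⟫) + (⟪x, x⟫ - 2 * ⟪Y, x⟫ + ⟪Y, Y⟫) := by linarith
  set ε : ℝ := (⟪Y, Y⟫ - ⟪Y, x⟫) / ((⟪Y, Y⟫ - ⟪Y, x⟫) + (⟪x, x⟫ - 2 * ⟪Y, x⟫ + ⟪Y, Y⟫))
    with hε
  have hε0 : 0 < ε := div_pos hu hd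
  have hε1 : ε ≤ 1 := by rw [hε, div_le_one hd]; linarith
  have hεus : ε * ((⟪Y, Y⟫ - ⟪Y, x⟫) + (⟪x, x⟫ - 2 * ⟪Y, x⟫ + ⟪Y, Y⟫))
      = ⟪Y, Y⟫ - ⟪Y, x⟫ := by rw [hε, div_mul_cancel₀ _ hd.ne']
  clear_value ε
  refine ⟨(1 - ε) • Y + ε • x, ⟨1 - ε, ε, by linarith, hε0.le, by ring, rfl⟩, ?_⟩
  have hexp : ⟪(1 - ε) • Y + ε • x, (1 - ε) • Y + ε • x⟫
      = (1-ε)*((1-ε)*⟪Y, Y⟫) + 2*((1-ε)*(ε*⟪Y, x⟫)) + ε*(ε*⟪x, x⟫) := by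
    simp only [inner_add_left, inner_add_right, real_inner_smul_left, real_inner_smul_right]
    linear_combination (-(ε*(1 - ε))) * real_inner_comm x Y
  rw [hexp]
  nlinarith [mul_pos hε0 hu, mul_pos (mul_pos hε0 hε0) hu, mul_nonneg hε0.le hs0]

lemma colorfulCaratheodory [FiniteDimensional ℝ E] {N : ℕ}
    (hN : Module.finrank ℝ E < N) {κ : Type*} [Fintype κ] [Nonempty κ]
    (f : Fin N → κ → E) (hf : ∀ i, (0:E) ∈ convexHull ℝ (Set.range (f i))) :
    ∃ l : Fin N → κ, (0:E) ∈ convexHull ℝ (Set.range fun i => f i (l i)) := by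
  classical
  have hNpos : 0 < N := lt_of_le_of_lt (Nat.zero_le _) hN
  have hmin : ∀ l : Fin N → κ, ∃ y ∈ convexHull ℝ (Set.range fun i => f i (l i)),
      ∀ z ∈ convexHull ℝ (Set.range fun i => f i (l i)), ⟪y, y⟫ ≤ ⟪z, z⟫ := by
    intro l
    have hcp : IsCompact (convexHull ℝ (Set.range fun i => f i (l i))) :=
      (Set.finite_range _).isCompact_convexHull ℝ
    have hne : (convexHull ℝ (Set.range fun i => f i (l i))).Nonempty :=
      ⟨f ⟨0, hNpos⟩ (l ⟨0, hNpos⟩), subset_convexHull ℝ _ ⟨⟨0, hNpos⟩, rfl⟩⟩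
    have hct : Continuous fun z : E => ⟪z, z⟫ :=
      continuous_inner.comp (continuous_id.prodMk continuous_id)
    obtain ⟨yy, hyC, hmn⟩ := hcp.exists_isMinOn hne hct.continuousOn
    exact ⟨yy, hyC, fun z hz => hmn hz⟩
  choose y hyC hymin using hmin
  obtain ⟨l, -, hl⟩ := Finset.exists_min_image Finset.univ (fun l => ⟪y l, y l⟫)
    ⟨Classical.arbitrary _, Finset.mem_univ _⟩
  refine ⟨l, ?_⟩
  by_contra h0
  set Y := y l with hYdef
  have hYC : Y ∈ convexHull ℝ (Set.range fun i => f i (l i)) := hyC l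
  have hY0 : Y ≠ 0 := fun hh => h0 (hh ▸ hYC)
  have ha : (0:ℝ) < ⟪Y, Y⟫ := lt_of_le_of_ne real_inner_self_nonneg (Ne.symm (inner_self_ne_zero.mpr hY0))
  -- every point of the hull has inner product with Y at least ⟪Y,Y⟫
  have key : ∀ z ∈ convexHull ℝ (Set.range fun i => f i (l i)), ⟪Y, Y⟫ ≤ ⟪Y, z⟫ := by
    intro z hz
    by_contra hcl
    push_neg at hcl
    obtain ⟨z', hz'seg, hz'⟩ := improve_inner hcl
    have hz'C : z' ∈ convexHull ℝ (Set.range fun i => f i (l i)) :=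
      (convex_convexHull ℝ _).segment_subset hYC hz hz'seg
    exact absurd (hymin l z' hz'C) (not_le.mpr hz')
  -- in each class pick a point with nonpositive inner product against Y
  have pick : ∀ i : Fin N, ∃ q : κ, ⟪Y, f i q⟫ ≤ 0 := by
    intro i
    by_contra hcl
    push_neg at hcl
    have h0' := hf i
    rw [convexHull_range_eq_exists_affineCombination] at h0'
    obtain ⟨s, w, hw0, hw1, hsum⟩ := h0'
    rw [Finset.affineCombination_eq_linear_combination _ _ _ hw1] at hsum
    have hval : ∑ q ∈ s, w q * ⟪Y, f i q⟫ = 0 := by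
      have : ⟪Y, ∑ q ∈ s, w q • f i q⟫ = (0:ℝ) := by rw [hsum, inner_zero_right]
      rw [inner_sum] at this
      simpa [real_inner_smul_right] using this
    have hpos : (0:ℝ) < ∑ q ∈ s, w q * ⟪Y, f i q⟫ := by
      obtain ⟨q0, hq0s, hq0⟩ : ∃ q ∈ s, 0 < w q := by
        by_contra hno
        push_neg at hno
        have hz : ∑ q ∈ s, w q = 0 :=
          Finset.sum_eq_zero fun q hq => le_antisymm (hno q hq) (hw0 q hq)
        rw [hw1] at hz; norm_num at hz
      exact Finset.sum_pos' (fun q hq => mul_nonneg (hw0 q hq) (hcl q).le)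
        ⟨q0, hq0s, mul_pos hq0 (hcl q0)⟩
    rw [hval] at hpos; exact lt_irrefl _ hpos
  choose qsel hqsel using pick
  -- decompose Y as a convex combination
  have hYm := hYC
  rw [convexHull_range_eq_exists_affineCombination] at hYm
  obtain ⟨s, w, hw0, hw1, hsum⟩ := hYm
  rw [Finset.affineCombination_eq_linear_combination _ _ _ hw1] at hsum
  -- on the support of w the inner product is exactly ⟪Y,Y⟫
  have hge : ∀ i : Fin N, ⟪Y, Y⟫ ≤ ⟪Y, f i (l i)⟫ := fun i =>
    key (f i (l i)) (subset_convexHull ℝ _ ⟨i, rfl⟩)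
  have hsupp : ∀ i ∈ s, w i ≠ 0 → ⟪Y, f i (l i)⟫ = ⟪Y, Y⟫ := by
    have h1 : ∑ i ∈ s, w i * ⟪Y, f i (l i)⟫ = ⟪Y, Y⟫ := by
      have : ⟪Y, ∑ i ∈ s, w i • f i (l i)⟫ = ⟪Y, Y⟫ := by rw [hsum]
      rw [inner_sum] at this
      simpa [real_inner_smul_right] using this
    have h2 : ∑ i ∈ s, w i * ⟪Y, Y⟫ = ⟪Y, Y⟫ := by rw [← Finset.sum_mul, hw1, one_mul]
    have hzero : ∑ i ∈ s, w i * (⟪Y, f i (l i)⟫ - ⟪Y, Y⟫) = 0 := by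
      have : ∑ i ∈ s, w i * (⟪Y, f i (l i)⟫ - ⟪Y, Y⟫)
          = (∑ i ∈ s, w i * ⟪Y, f i (l i)⟫) - ∑ i ∈ s, w i * ⟪Y, Y⟫ := by
        rw [← Finset.sum_sub_distrib]; apply Finset.sum_congr rfl; intros; ring
      rw [this, h1, h2, sub_self]
    intro i hi hwi
    have hterm := (Finset.sum_eq_zero_iff_of_nonneg
      (fun i hi => mul_nonneg (hw0 i hi) (by linarith [hge i]))).mp hzero i hi
    rcases mul_eq_zero.mp hterm with h | h
    · exact absurd h hwi
    · linarith [sub_eq_zero.mp h, hge i]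
  -- restrict to the support
  set s' : Finset (Fin N) := {i ∈ s | w i ≠ 0} with hs'
  have hs'sub : s' ⊆ s := Finset.filter_subset _ _
  have hw1' : ∑ i ∈ s', w i = 1 := by rw [hs', Finset.sum_filter_ne_zero]; exact hw1
  have hsum' : ∑ i ∈ s', w i • f i (l i) = Y := by
    rw [← hsum, hs']
    exact Finset.sum_filter_of_ne fun i hi hne hw => hne (by rw [hw, zero_smul])
  have hYhull : Y ∈ convexHull ℝ ((fun i => f i (l i)) '' ↑s') := by
    rw [← hsum', ← Finset.centerMass_eq_of_sum_1 _ _ hw1']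
    exact Finset.centerMass_mem_convexHull s'
      (fun i hi => hw0 i (hs'sub hi)) (by rw [hw1']; norm_num)
      (fun i hi => Set.mem_image_of_mem _ hi)
  obtain ⟨ι, hfin, z, v, hrange, hindep, hvpos, hvsum, hcomb⟩ :=
    eq_pos_convex_span_of_mem_convexHull hYhull
  -- all points z j lie on the hyperplane ⟪Y, ·⟫ = ⟪Y,Y⟫
  have hzH : ∀ j : ι, ⟪Y, z j⟫ = ⟪Y, Y⟫ := by
    intro j
    obtain ⟨i, hi, hzi⟩ := hrange ⟨j, rfl⟩
    rw [← hzi]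
    have his' : i ∈ s' := Finset.mem_coe.mp hi
    rw [hs', Finset.mem_filter] at his'
    exact hsupp i his'.1 his'.2
  -- the index type is small
  have hι : Nonempty ι := by
    by_contra hno
    rw [not_nonempty_iff] at hno
    rw [Finset.univ_eq_empty, Finset.sum_empty] at hvsum
    norm_num at hvsum
  have hcard : Fintype.card ι ≤ Module.finrank ℝ E := by
    set φ : E →ₗ[ℝ] ℝ :=
      { toFun := fun v => ⟪Y, v⟫
        map_add' := fun a b => inner_add_right Y a b
        map_smul' := fun c a => real_inner_smul_right Y a c } with hφ
    have hφY : φ Y = ⟪Y, Y⟫ := rfl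
    have hrange_top : LinearMap.range φ = ⊤ := by
      rw [LinearMap.range_eq_top]
      intro r
      have hYY : ‖Y‖ ^ 2 ≠ 0 := by rw [← real_inner_self_eq_norm_sq]; exact ha.ne'
      exact ⟨(r / ⟪Y, Y⟫) • Y, by simp [hφ, real_inner_smul_right, div_mul_cancel₀ r hYY]⟩
    have hkerrank : Module.finrank ℝ (LinearMap.ker φ) + 1 = Module.finrank ℝ E := by
      have := LinearMap.finrank_range_add_finrank_ker φ
      rw [hrange_top, finrank_top, Module.finrank_self] at this
      omega
    have hvs : vectorSpan ℝ (Set.range z) ≤ LinearMap.ker φ := by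
      rw [vectorSpan_def, Submodule.span_le]
      rintro u ⟨p, hp, q, hq, rfl⟩
      obtain ⟨jp, rfl⟩ := hp
      obtain ⟨jq, rfl⟩ := hq
      simp [LinearMap.mem_ker, vsub_eq_sub, hφ, inner_sub_right, hzH jp, hzH jq]
    have := hindep.finrank_vectorSpan_add_one
    have hmono : Module.finrank ℝ (vectorSpan ℝ (Set.range z))
        ≤ Module.finrank ℝ (LinearMap.ker φ) := Submodule.finrank_mono hvs
    omega
  -- choose representative indices
  have hchoose : ∀ j : ι, ∃ i : Fin N, i ∈ s' ∧ f i (l i) = z j := by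
    intro j
    obtain ⟨i, hi, hzi⟩ := hrange ⟨j, rfl⟩
    exact ⟨i, by exact_mod_cast hi, hzi⟩
  choose g hg1 hg2 using hchoose
  have hginj : Function.Injective g := by
    intro j j' hjj
    apply hindep.injective
    rw [← hg2 j, ← hg2 j', hjj]
  -- find an unused index
  obtain ⟨i0, hi0⟩ : ∃ i0 : Fin N, ∀ j : ι, g j ≠ i0 := by
    by_contra hno
    push_neg at hno
    have hsub : (Finset.univ : Finset (Fin N)) ⊆ Finset.univ.image g := by
      intro i _
      obtain ⟨j, hj⟩ := hno i
      exact Finset.mem_image.mpr ⟨j, Finset.mem_univ _, hj⟩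
    have := Finset.card_le_card hsub
    rw [Finset.card_univ, Fintype.card_fin, Finset.card_image_of_injective _ hginj,
      Finset.card_univ] at this
    omega
  -- the improved selection
  set l' : Fin N → κ := Function.update l i0 (qsel i0) with hl'
  have hYl' : Y ∈ convexHull ℝ (Set.range fun i => f i (l' i)) := by
    rw [← hcomb, ← Finset.centerMass_eq_of_sum_1 _ _ hvsum]
    refine Finset.centerMass_mem_convexHull _ (fun j _ => (hvpos j).le)
      (by rw [hvsum]; norm_num) (fun j _ => ?_)
    refine ⟨g j, ?_⟩
    show f (g j) (Function.update l i0 (qsel i0) (g j)) = z j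
    rw [Function.update_of_ne (hi0 j), hg2 j]
  have hQl' : f i0 (qsel i0) ∈ convexHull ℝ (Set.range fun i => f i (l' i)) := by
    refine subset_convexHull ℝ _ ⟨i0, ?_⟩
    show f i0 (Function.update l i0 (qsel i0) i0) = f i0 (qsel i0)
    rw [Function.update_self]
  have hlt : ⟪Y, f i0 (qsel i0)⟫ < ⟪Y, Y⟫ := lt_of_le_of_lt (hqsel i0) ha
  obtain ⟨z', hz'seg, hz'⟩ := improve_inner hlt
  have hz'C : z' ∈ convexHull ℝ (Set.range fun i => f i (l' i)) :=
    (convex_convexHull ℝ _).segment_subset hYl' hQl' hz'seg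
  have h1 : ⟪Y, Y⟫ ≤ ⟪y l', y l'⟫ := hl l' (Finset.mem_univ _)
  have h2 : ⟪y l', y l'⟫ ≤ ⟪z', z'⟫ := hymin l' z' hz'C
  linarith

end CC

section Tverberg

/-- **Tverberg's theorem** (partition version, for `N ≥ (m+1)(k-1)+1` points in `ℝ^m`). -/
lemma tverberg {m k N : ℕ} (hk : 1 ≤ k) (hN : (m+1)*(k-1)+1 ≤ N)
    (a : Fin N → Fin m → ℝ) :
    ∃ (l : Fin N → Fin k) (w : Fin N → ℝ) (x : Fin m → ℝ),
      (∀ i, 0 ≤ w i) ∧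
      (∀ c : Fin k, ∑ i ∈ Finset.univ.filter (fun i => l i = c), w i = 1) ∧
      (∀ c : Fin k, ∑ i ∈ Finset.univ.filter (fun i => l i = c), w i • a i = x) := by
  classical
  have hklt : k - 1 < k := Nat.sub_lt (by omega) one_pos
  set clast : Fin k := ⟨k - 1, hklt⟩ with hclast
  -- the auxiliary vectors u
  set u : Fin k → Fin (k-1) → ℝ := fun c r =>
    (if (c:ℕ) = (r:ℕ) then 1 else 0) - (if (c:ℕ) = k-1 then 1 else 0) with hu
  have hdelta : ∀ (c0 : Fin k) (z : Fin k → ℝ),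
      (∑ c : Fin k, (if (c:ℕ) = (c0:ℕ) then (1:ℝ) else 0) * z c) = z c0 := by
    intro c0 z
    have h1 : ∀ c : Fin k, (if (c:ℕ) = (c0:ℕ) then (1:ℝ) else 0) * z c
        = if c = c0 then z c else 0 := by
      intro c; by_cases h : c = c0 <;> simp [h, Fin.val_inj]
    rw [Finset.sum_congr rfl fun c _ => h1 c]
    simp
  have husum : ∀ r : Fin (k-1), ∑ c : Fin k, u c r = 0 := by
    intro r
    have hrk : (r:ℕ) < k := lt_of_lt_of_le r.isLt (Nat.sub_le k 1)
    have e1 : ∑ c : Fin k, (if (c:ℕ) = (r:ℕ) then (1:ℝ) else 0) = 1 := by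
      have := hdelta ⟨(r:ℕ), hrk⟩ (fun _ => 1)
      simpa using this
    have e2 : ∑ c : Fin k, (if (c:ℕ) = k-1 then (1:ℝ) else 0) = 1 := by
      have := hdelta clast (fun _ => 1)
      simpa using this
    rw [hu]
    rw [Finset.sum_sub_distrib, e1, e2, sub_self]
  have hukey : ∀ z : Fin k → ℝ, (∀ r : Fin (k-1), ∑ c : Fin k, u c r * z c = 0) →
      ∀ c : Fin k, z c = z clast := by
    intro z hz c
    by_cases hc : (c:ℕ) = k - 1
    · congr 1
      exact Fin.ext hc
    · have hck : (c:ℕ) < k - 1 := by omega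
      have := hz ⟨(c:ℕ), hck⟩
      rw [hu] at this
      simp only [sub_mul] at this
      rw [Finset.sum_sub_distrib] at this
      have e1 := hdelta ⟨(c:ℕ), c.isLt⟩ z
      have e2 := hdelta clast z
      simp only at e1 e2
      rw [e1, e2] at this
      have h3 : z ⟨(c:ℕ), c.isLt⟩ = z clast := by linarith
      simpa using h3
  -- the lifted points
  set abar : Fin N → Fin (m+1) → ℝ := fun i => Fin.cons 1 (a i) with habar
  set ι2 := Fin (k-1) × Fin (m+1) with hι2
  let L := WithLp.linearEquiv 2 ℝ (ι2 → ℝ)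
  set G : Fin N → Fin k → (ι2 → ℝ) := fun i c rt => u c rt.1 * abar i rt.2 with hG
  set F : Fin N → Fin k → EuclideanSpace ℝ ι2 := fun i c => L.symm (G i c) with hF
  have hkR : (k:ℝ) ≠ 0 := by positivity
  -- each class contains 0 in its convex hull
  have hf : ∀ i, (0 : EuclideanSpace ℝ ι2) ∈ convexHull ℝ (Set.range (F i)) := by
    intro i
    have hGsum : ∑ c : Fin k, ((k:ℝ)⁻¹) • G i c = 0 := by
      funext rt
      rw [Finset.sum_apply]
      simp only [Pi.smul_apply, hG, smul_eq_mul, Pi.zero_apply]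
      have : ∀ c : Fin k, (k:ℝ)⁻¹ * (u c rt.1 * abar i rt.2)
          = ((k:ℝ)⁻¹ * abar i rt.2) * u c rt.1 := fun c => by ring
      rw [Finset.sum_congr rfl fun c _ => this c, ← Finset.mul_sum, husum rt.1, mul_zero]
    have hFsum : ∑ c : Fin k, ((k:ℝ)⁻¹) • F i c = 0 := by
      have : ∑ c : Fin k, ((k:ℝ)⁻¹) • F i c
          = L.symm (∑ c : Fin k, ((k:ℝ)⁻¹) • G i c) := by
        rw [map_sum]
        exact Finset.sum_congr rfl fun c _ => (L.symm.map_smul ((k:ℝ)⁻¹) (G i c)).symm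
      rw [this, hGsum, map_zero]
    have hwsum : ∑ c : Fin k, ((k:ℝ)⁻¹) = 1 := by
      rw [Finset.sum_const, Finset.card_univ, Fintype.card_fin, nsmul_eq_mul,
        mul_inv_cancel₀ hkR]
    rw [← hFsum, ← Finset.centerMass_eq_of_sum_1 _ _ hwsum]
    exact Finset.centerMass_mem_convexHull _ (fun c _ => by positivity)
      (by rw [hwsum]; norm_num) (fun c _ => ⟨c, rfl⟩)
  -- apply colorful Caratheodory
  have hdim : Module.finrank ℝ (EuclideanSpace ℝ ι2) < N := by
    rw [finrank_euclideanSpace]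
    simp only [hι2, Fintype.card_prod, Fintype.card_fin]
    calc (k-1) * (m+1) = (m+1) * (k-1) := by ring
    _ < N := by omega
  have : Nonempty (Fin k) := ⟨clast⟩
  obtain ⟨l, hl⟩ := colorfulCaratheodory hdim F hf
  -- extract weights
  rw [convexHull_range_eq_exists_affineCombination] at hl
  obtain ⟨s, w0, hw00, hw01, hsum0⟩ := hl
  rw [Finset.affineCombination_eq_linear_combination _ _ _ hw01] at hsum0
  set w' : Fin N → ℝ := fun i => if i ∈ s then w0 i else 0 with hw'
  have hw'0 : ∀ i, 0 ≤ w' i := by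
    intro i
    by_cases h : i ∈ s
    · simpa [hw', h] using hw00 i h
    · simp [hw', h]
  have hw'1 : ∑ i : Fin N, w' i = 1 := by
    rw [hw']
    rw [Finset.sum_ite_mem, Finset.univ_inter, hw01]
  have hGsum0 : ∑ i : Fin N, w' i • G i (l i) = 0 := by
    have h1 : ∑ i : Fin N, w' i • F i (l i) = 0 := by
      have h2 : ∀ i : Fin N, w' i • F i (l i) = if i ∈ s then w0 i • F i (l i) else 0 := by
        intro i
        rw [hw']; dsimp only
        split
        · rfl
        · rw [zero_smul]
      rw [Finset.sum_congr rfl fun i _ => h2 i, Finset.sum_ite_mem, Finset.univ_inter, hsum0]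
    have h3 : ∑ i : Fin N, w' i • G i (l i) = L (∑ i : Fin N, w' i • F i (l i)) := by
      rw [map_sum]
      refine Finset.sum_congr rfl fun i _ => ?_
      rw [L.map_smul, hF]
      dsimp only
      rw [L.apply_symm_apply]
    rw [h3, h1, map_zero]
  -- fiber sums
  set z : Fin k → Fin (m+1) → ℝ :=
    fun c t => ∑ i ∈ Finset.univ.filter (fun i => l i = c), w' i * abar i t with hz
  have hzkey : ∀ (r : Fin (k-1)) (t : Fin (m+1)), ∑ c : Fin k, u c r * z c t = 0 := by
    intro r t
    have h4 : ∀ c : Fin k, u c r * z c t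
        = ∑ i ∈ Finset.univ.filter (fun i => l i = c), w' i * G i (l i) (r, t) := by
      intro c
      rw [hz]; dsimp only
      rw [Finset.mul_sum]
      refine Finset.sum_congr rfl fun i hi => ?_
      have hlic : l i = c := by
        have := (Finset.mem_filter.mp hi).2
        exact this
      rw [hG]; dsimp only
      rw [hlic]; ring
    rw [Finset.sum_congr rfl fun c _ => h4 c]
    rw [Finset.sum_fiberwise Finset.univ (fun i => l i) (fun i => w' i * G i (l i) (r, t))]
    have h5 := congrFun hGsum0 (r, t)
    rw [Finset.sum_apply] at h5
    simpa [Pi.smul_apply] using h5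
  have hzeq : ∀ (c : Fin k) (t : Fin (m+1)), z c t = z clast t := by
    intro c t
    exact hukey (fun c => z c t) (fun r => hzkey r t) c
  have hweight : ∀ c : Fin k, ∑ i ∈ Finset.univ.filter (fun i => l i = c), w' i = z c 0 := by
    intro c
    rw [hz]; dsimp only
    refine Finset.sum_congr rfl fun i _ => ?_
    rw [habar]; dsimp only
    rw [Fin.cons_zero, mul_one]
  have hz0 : ∀ c : Fin k, z c 0 = (k:ℝ)⁻¹ := by
    have hsumz : ∑ c : Fin k, z c 0 = 1 := by
      rw [Finset.sum_congr rfl fun c _ => (hweight c).symm]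
      rw [Finset.sum_fiberwise Finset.univ (fun i => l i) (fun i => w' i)]
      exact hw'1
    intro c
    have h5 : ∑ c' : Fin k, z c' 0 = (k:ℝ) * z clast 0 := by
      rw [Finset.sum_congr rfl fun c' _ => hzeq c' 0, Finset.sum_const, Finset.card_univ,
        Fintype.card_fin, nsmul_eq_mul]
    rw [hsumz] at h5
    rw [hzeq c 0]
    field_simp
    linarith
  -- conclusion
  refine ⟨l, fun i => (k:ℝ) * w' i, fun j => (k:ℝ) * z clast j.succ, ?_, ?_, ?_⟩
  · intro i
    exact mul_nonneg (Nat.cast_nonneg k) (hw'0 i)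
  · intro c
    rw [← Finset.mul_sum, hweight c, hz0 c, mul_inv_cancel₀ hkR]
  · intro c
    funext j
    rw [Finset.sum_apply]
    have h6 : ∑ i ∈ Finset.univ.filter (fun i => l i = c), ((k:ℝ) * w' i) * a i j
        = (k:ℝ) * z c j.succ := by
      rw [hz]; dsimp only
      rw [Finset.mul_sum]
      refine Finset.sum_congr rfl fun i _ => ?_
      rw [habar]; dsimp only
      rw [Fin.cons_succ]
      ring
    calc ∑ i ∈ Finset.univ.filter (fun i => l i = c), (((k:ℝ) * w' i) • a i) j
        = ∑ i ∈ Finset.univ.filter (fun i => l i = c), ((k:ℝ) * w' i) * a i j := by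
          refine Finset.sum_congr rfl fun i _ => ?_
          simp
      _ = (k:ℝ) * z c j.succ := h6
      _ = (k:ℝ) * z clast j.succ := by rw [hzeq c j.succ]

end Tverberg

section MatrixPart

open Matrix Kronecker

variable {α β : Type*} [Fintype α] [Fintype β] [DecidableEq α] [DecidableEq β]

/-- The isometric embedding matrix associated to an injection `φ`. -/
def embedMat (φ : α → β) : Matrix β α ℂ := fun s t => if s = φ t then 1 else 0

lemma embed_conj (φ : α → β) (A : Matrix β β ℂ) :
    (embedMat φ)ᴴ * A * embedMat φ = A.submatrix φ φ := by
  ext t t'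
  have h1 : ∀ s', ((embedMat φ)ᴴ * A) t s' * embedMat φ s' t'
      = if s' = φ t' then ((embedMat φ)ᴴ * A) t s' else 0 := by
    intro s'
    by_cases h : s' = φ t' <;> simp [embedMat, h]
  rw [Matrix.mul_apply, Finset.sum_congr rfl fun s' _ => h1 s',
    Finset.sum_ite_eq' Finset.univ (φ t') _]
  simp only [Finset.mem_univ, if_true]
  have h2 : ∀ s, (embedMat φ)ᴴ t s * A s (φ t')
      = if s = φ t then A s (φ t') else 0 := by
    intro s
    by_cases h : s = φ t <;> simp [embedMat, Matrix.conjTranspose_apply, h]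
  rw [Matrix.mul_apply, Finset.sum_congr rfl fun s _ => h2 s,
    Finset.sum_ite_eq' Finset.univ (φ t) _]
  simp [Matrix.submatrix_apply]

lemma embed_orth (φ : α → β) (hφ : Function.Injective φ) :
    (embedMat φ)ᴴ * embedMat φ = 1 := by
  have h := embed_conj φ (1 : Matrix β β ℂ)
  rw [Matrix.mul_one] at h
  rw [h]
  ext t t'
  simp [Matrix.submatrix_apply, Matrix.one_apply, hφ.eq_iff]

lemma submatrix_diag (φ : α → β) (hφ : Function.Injective φ) (g : β → ℂ) :
    (Matrix.diagonal g).submatrix φ φ = Matrix.diagonal (fun t => g (φ t)) := by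
  ext t t'
  by_cases h : t = t'
  · subst h; simp [Matrix.submatrix_apply, Matrix.diagonal_apply_eq]
  · rw [Matrix.submatrix_apply, Matrix.diagonal_apply_ne _ (fun hc => h (hφ hc)),
      Matrix.diagonal_apply_ne _ h]

/-- The selection matrix encoding a Tverberg partition and weights in each block. -/
noncomputable def selMat {p N k : ℕ} (l : Fin p → Fin N → Fin k) (w : Fin p → Fin N → ℝ) :
    Matrix (Fin p × Fin N) (Fin p × Fin k) ℂ :=
  fun ri qc => if ri.1 = qc.1 ∧ l ri.1 ri.2 = qc.2
    then ((Real.sqrt (w ri.1 ri.2) : ℝ) : ℂ) else 0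

lemma core_calc {p N k : ℕ} (l : Fin p → Fin N → Fin k) (w : Fin p → Fin N → ℝ)
    (hw : ∀ q i, 0 ≤ w q i) (g : Fin p × Fin N → ℝ) (G : Fin p → ℝ)
    (hg : ∀ (q : Fin p) (c : Fin k),
      ∑ i ∈ Finset.univ.filter (fun i => l q i = c), w q i * g (q, i) = G q) :
    (selMat l w)ᴴ * Matrix.diagonal (fun t => (g t : ℂ)) * (selMat l w)
      = (Matrix.diagonal fun q => (G q : ℂ)) ⊗ₖ (1 : Matrix (Fin k) (Fin k) ℂ) := by
  ext ⟨q, c⟩ ⟨q', c'⟩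
  rw [Matrix.mul_assoc, Matrix.mul_apply]
  simp only [Matrix.conjTranspose_apply, Matrix.diagonal_mul]
  rw [Fintype.sum_prod_type]
  by_cases hqq : q = q'
  · subst hqq
    rw [Finset.sum_eq_single q (fun r _ hr => Finset.sum_eq_zero fun i _ => by
        simp [selMat, hr]) (fun h => absurd (Finset.mem_univ q) h)]
    have hin : ∀ i : Fin N,
        star (selMat l w (q, i) (q, c)) * ((g (q, i) : ℂ) * selMat l w (q, i) (q, c'))
        = if l q i = c ∧ l q i = c' then ((w q i * g (q, i) : ℝ) : ℂ) else 0 := by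
      intro i
      have hst : star ((Real.sqrt (w q i) : ℝ) : ℂ) = ((Real.sqrt (w q i) : ℝ) : ℂ) := by
        rw [Complex.star_def, Complex.conj_ofReal]
      have hsel1 : selMat l w (q, i) (q, c)
          = if l q i = c then ((Real.sqrt (w q i) : ℝ) : ℂ) else 0 := by simp [selMat]
      have hsel2 : selMat l w (q, i) (q, c')
          = if l q i = c' then ((Real.sqrt (w q i) : ℝ) : ℂ) else 0 := by simp [selMat]
      rw [hsel1, hsel2]
      by_cases h : l q i = c
      · by_cases h' : l q i = c'
        · rw [if_pos h, if_pos h', if_pos ⟨h, h'⟩, hst, ← Complex.ofReal_mul,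
            ← Complex.ofReal_mul, Complex.ofReal_inj]
          have h2 := Real.mul_self_sqrt (hw q i)
          linear_combination g (q, i) * h2
        · rw [if_neg h', if_neg (show ¬(l q i = c ∧ l q i = c') from fun hc => h' hc.2),
            mul_zero, mul_zero]
      · rw [if_neg h, if_neg (show ¬(l q i = c ∧ l q i = c') from fun hc => h hc.1),
          star_zero, zero_mul]
    rw [Finset.sum_congr rfl fun i _ => hin i]
    by_cases hcc : c = c'
    · subst hcc
      simp only [and_self]
      rw [← Finset.sum_filter, ← Complex.ofReal_sum, hg q c]
      simp [Matrix.kroneckerMap_apply, Matrix.one_apply]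
    · have hz : ∀ i : Fin N,
          (if l q i = c ∧ l q i = c' then ((w q i * g (q, i) : ℝ) : ℂ) else 0) = 0 := by
        intro i
        by_cases hcond : l q i = c ∧ l q i = c'
        · exact absurd (hcond.1.symm.trans hcond.2) hcc
        · rw [if_neg hcond]
      rw [Finset.sum_congr rfl fun i _ => hz i, Finset.sum_const_zero]
      simp [Matrix.kroneckerMap_apply, Matrix.one_apply, hcc]
  · have hz : ∀ (r : Fin p) (i : Fin N),
        star (selMat l w (r, i) (q, c)) * ((g (r, i) : ℂ) * selMat l w (r, i) (q', c')) = 0 := by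
      intro r i
      by_cases h1 : r = q
      · subst h1
        have h2 : r ≠ q' := hqq
        simp [selMat, h2]
      · simp [selMat, h1]
    rw [Finset.sum_congr rfl fun r _ => Finset.sum_congr rfl fun i _ => hz r i]
    simp [Matrix.kroneckerMap_apply, Matrix.diagonal_apply_ne _ hqq]

end MatrixPart



/-- Proposition 4.5 (2): For `n × n` real diagonal matrices
`A_1,…,A_m` and `k, p ≥ 1`, if `n ≥ p((m+1)k - m)` then the joint rank
`(k:p)`-matricial range `Λ_{(k:p)}(A_1,…,A_m)` is nonempty. -/
theorem stmt16 (n m k p : ℕ) (hk : 1 ≤ k) (hp : 1 ≤ p)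
    (d : Fin m → Fin n → ℝ)
    (hn : p * ((m + 1) * k - m) ≤ n) :
    (matricialRange k p (fun i => Matrix.diagonal fun j => ((d i j : ℝ) : ℂ))).Nonempty := by
  obtain ⟨k', rfl⟩ : ∃ k', k = k' + 1 := ⟨k - 1, by omega⟩
  set N : ℕ := (m + 1) * (k' + 1) - m with hNdef
  have hNeq : N = (m + 1) * k' + 1 := by
    have ht : (m + 1) * (k' + 1) = (m + 1) * k' + m + 1 := by ring
    rw [hNdef, ht]
    generalize (m + 1) * k' = t
    omega
  have hcast : N * p ≤ n := by
    rw [Nat.mul_comm]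
    exact hn
  set φ : Fin p × Fin N → Fin n :=
    fun t => Fin.castLE hcast (finProdFinEquiv (t.2, t.1)) with hφ
  have hφinj : Function.Injective φ := by
    intro t t' h
    rw [hφ] at h
    have h1 := Fin.castLE_injective hcast h
    have h2 := finProdFinEquiv.injective h1
    exact Prod.ext (congrArg Prod.snd h2) (congrArg Prod.fst h2)
  have htv : ∀ q : Fin p, ∃ (l : Fin N → Fin (k'+1)) (w : Fin N → ℝ) (x : Fin m → ℝ),
      (∀ i, 0 ≤ w i) ∧
      (∀ c, ∑ i ∈ Finset.univ.filter (fun i => l i = c), w i = 1) ∧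
      (∀ c, ∑ i ∈ Finset.univ.filter (fun i => l i = c),
          w i • (fun j => d j (φ (q, i))) = x) := by
    intro q
    exact tverberg (by omega) (by rw [hNeq]; simp) _
  choose lsel wsel xsel hsw0 hsw1 hswx using htv
  refine ⟨fun j => Matrix.diagonal (fun q => (xsel q j : ℂ)),
    fun j => Matrix.isDiag_diagonal _,
    embedMat φ * selMat lsel wsel, ?_, ?_⟩
  · rw [Matrix.conjTranspose_mul, Matrix.mul_assoc,
      ← Matrix.mul_assoc ((embedMat φ)ᴴ) (embedMat φ) (selMat lsel wsel),
      embed_orth φ hφinj, Matrix.one_mul]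
    have hone := core_calc lsel wsel hsw0 (fun _ => (1:ℝ)) (fun _ => (1:ℝ))
      (fun q c => by simpa using hsw1 q c)
    simp only [Complex.ofReal_one, Matrix.diagonal_one, Matrix.mul_one,
      Matrix.one_kronecker_one] at hone
    exact hone
  · intro j
    dsimp only
    have hassoc : (embedMat φ * selMat lsel wsel)ᴴ
          * Matrix.diagonal (fun s => ((d j s : ℝ) : ℂ)) * (embedMat φ * selMat lsel wsel)
        = (selMat lsel wsel)ᴴ
          * (((embedMat φ)ᴴ * Matrix.diagonal (fun s => ((d j s : ℝ) : ℂ)) * embedMat φ)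
            * selMat lsel wsel) := by
      rw [Matrix.conjTranspose_mul]
      simp only [Matrix.mul_assoc]
    rw [hassoc, embed_conj, submatrix_diag φ hφinj, ← Matrix.mul_assoc]
    refine core_calc lsel wsel hsw0 (fun t => d j (φ t)) (fun q => xsel q j) ?_
    intro q c
    have hx := congrFun (hswx q c) j
    rw [Finset.sum_apply] at hx
    simpa [Pi.smul_apply, smul_eq_mul] using hx
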